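/- Let (x1, x2, x3) ∈ ℂ³ satisfy |x1 - conj(x2)·x3| + |x2 - conj(x1)·x3| < 1 - |x3|², and |x1 + z·x2| < 2 for all z with |z| = 1. Then for every z on the unit circle, the point (s, p) = (x1 + z·x2, z·x3) satisfies |s - conj(s)·p| < 1 - |p|² and |s| < 2. -/

import Mathlib

open ComplexConjugate

theorem stmt_1 (x1 x2 x3 : ℂ)
    (h1 : ‖x1 - conj x2 * x3‖ + ‖x2 - conj x1 * x3‖
        < 1 - ‖x3‖ ^ 2)
    (h2 : ∀ z : ℂ, ‖z‖ = 1 → ‖x1 + z * x2‖ < 2) :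
    ∀ z : ℂ, ‖z‖ = 1 →
      ‖(x1 + z * x2) - conj (x1 + z * x2) * (z * x3)‖
          < 1 - ‖z * x3‖ ^ 2 ∧
        ‖x1 + z * x2‖ < 2 := by
  intro z hz
  have hzz : z * conj z = 1 := by
    rw [Complex.mul_conj]
    norm_cast
    rw [Complex.normSq_eq_norm_sq, hz]; norm_num
  have key : (x1 + z * x2) - conj (x1 + z * x2) * (z * x3)
      = (x1 - conj x2 * x3) + z * (x2 - conj x1 * x3) := by
    simp only [map_add, map_mul]
    linear_combination (-(conj x2 * x3)) * hzz
  have habs : ‖z * x3‖ = ‖x3‖ := by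
    rw [norm_mul, hz, one_mul]
  refine ⟨?_, h2 z hz⟩
  rw [key, habs]
  refine lt_of_le_of_lt ((norm_add_le _ _).trans ?_) h1
  rw [norm_mul, hz, one_mul]
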